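/- Let N ≥ 4 be an integer and 0 < δ < 1/4. Let f be a real-valued function of class C¹ on [N, 2N] such that there exist λ₁ > 0 and c₁ ≥ 1 with λ₁ ≤ |f′(x)| ≤ c₁·λ₁ for all x ∈ [N, 2N]. Then R(f,N,δ) ≤ 2c₁·N·λ₁ + 4c₁·N·δ + 2δ/λ₁ + 1. -/

import Mathlib

lemma spread_card_le (t : Finset ℤ) (B : ℝ) (hB : 0 ≤ B)
    (h : ∀ a ∈ t, ∀ b ∈ t, (a : ℝ) - b ≤ B) : (t.card : ℝ) ≤ B + 1 := by
  rcases t.eq_empty_or_nonempty with rfl | ht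
  · simp; linarith
  · have hmin := t.min'_mem ht
    have hmax := t.max'_mem ht
    have hsub : t ⊆ Finset.Icc (t.min' ht) (t.max' ht) := fun a ha =>
      Finset.mem_Icc.2 ⟨t.min'_le a ha, t.le_max' a ha⟩
    have hle : t.min' ht ≤ t.max' ht := t.min'_le _ hmax
    have hcard : t.card ≤ (t.max' ht + 1 - t.min' ht).toNat := by
      calc t.card ≤ (Finset.Icc (t.min' ht) (t.max' ht)).card := Finset.card_le_card hsub
        _ = _ := Int.card_Icc _ _
    have hd : (t.max' ht : ℝ) - t.min' ht ≤ B := h _ hmax _ hmin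
    have h0 : (0:ℤ) ≤ t.max' ht + 1 - t.min' ht := by omega
    calc (t.card : ℝ) ≤ (((t.max' ht + 1 - t.min' ht).toNat : ℤ) : ℝ) := by exact_mod_cast hcard
      _ = ((t.max' ht : ℝ) + 1 - t.min' ht) := by rw [Int.toNat_of_nonneg h0]; push_cast; ring
      _ ≤ B + 1 := by linarith

theorem stmt_1 (N : ℕ) (hN : 4 ≤ N)
    (δ : ℝ) (hδ0 : 0 < δ) (hδ1 : δ < 1/4)
    (f : ℝ → ℝ) (lam c : ℝ) (hlam : 0 < lam) (hc : 1 ≤ c)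
    (hf : ContDiffOn ℝ 1 f (Set.Icc (N:ℝ) (2*N)))
    (hder : ∀ x ∈ Set.Icc (N:ℝ) (2*N),
      lam ≤ |derivWithin f (Set.Icc (N:ℝ) (2*N)) x| ∧
      |derivWithin f (Set.Icc (N:ℝ) (2*N)) x| ≤ c * lam) :
    (({n : ℤ | (N:ℤ) ≤ n ∧ n ≤ 2*N ∧ |f n - round (f n)| < δ}.ncard : ℝ)) ≤
      2 * c * N * lam + 4 * c * N * δ + 2 * δ / lam + 1 := by
  classical
  have hN4 : (4:ℝ) ≤ N := by exact_mod_cast hN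
  have hN2 : (N:ℝ) < 2*N := by linarith
  set I : Set ℝ := Set.Icc (N:ℝ) (2*N) with hIdef
  have hconv : Convex ℝ I := convex_Icc _ _
  have hud : UniqueDiffOn ℝ I := uniqueDiffOn_Icc hN2
  have hdiff : DifferentiableOn ℝ f I := hf.differentiableOn one_ne_zero
  have hcont : ContinuousOn f I := hf.continuousOn
  set D : ℝ → ℝ := derivWithin f I with hDdef
  have hDcont : ContinuousOn D I := hf.continuousOn_derivWithin hud le_rfl
  have hclam : (0:ℝ) ≤ c * lam := by positivity
  -- upper Lipschitz bound
  have hupper : ∀ x ∈ I, ∀ y ∈ I, |f y - f x| ≤ c * lam * |y - x| := by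
    intro x hx y hy
    have := Convex.norm_image_sub_le_of_norm_derivWithin_le hdiff
      (fun z hz => by simpa [Real.norm_eq_abs] using (hder z hz).2) hconv hx hy
    simpa [Real.norm_eq_abs] using this
  -- deriv = derivWithin on interior
  have hderiv_eq : ∀ x ∈ interior I, deriv f x = D x := by
    intro x hx
    exact (derivWithin_of_mem_nhds (mem_interior_iff_mem_nhds.1 hx)).symm
  -- constant sign of derivative
  have hsign : (∀ x ∈ I, lam ≤ D x) ∨ (∀ x ∈ I, D x ≤ -lam) := by
    by_contra h
    push_neg at h
    obtain ⟨⟨a, ha, ha2⟩, ⟨b, hb, hb2⟩⟩ := h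
    have haneg : D a ≤ -lam := by
      have := (hder a ha).1
      rcases abs_cases (D a) with ⟨h1, h2⟩ | ⟨h1, h2⟩ <;> linarith
    have hbpos : lam ≤ D b := by
      have := (hder b hb).1
      rcases abs_cases (D b) with ⟨h1, h2⟩ | ⟨h1, h2⟩ <;> linarith
    have hsub : Set.uIcc a b ⊆ I := hconv.ordConnected.uIcc_subset ha hb
    have h0 : (0:ℝ) ∈ Set.uIcc (D a) (D b) := by
      rw [Set.mem_uIcc]; left; constructor <;> linarith
    obtain ⟨ξ, hξ, hξ0⟩ := intermediate_value_uIcc (hDcont.mono hsub) h0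
    have := (hder ξ (hsub hξ)).1
    rw [hξ0] at this; simp at this; linarith
  -- lower bound
  have hlower : ∀ x ∈ I, ∀ y ∈ I, x ≤ y → lam * (y - x) ≤ |f y - f x| := by
    rcases hsign with hpos | hneg
    · intro x hx y hy hxy
      have := hconv.mul_sub_le_image_sub_of_le_deriv hcont (hdiff.mono interior_subset)
        (fun z hz => by rw [hderiv_eq z hz]; exact hpos z (interior_subset hz)) x hx y hy hxy
      calc lam * (y - x) ≤ f y - f x := this
        _ ≤ |f y - f x| := le_abs_self _
    · intro x hx y hy hxy
      have := hconv.image_sub_le_mul_sub_of_deriv_le hcont (hdiff.mono interior_subset)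
        (fun z hz => by rw [hderiv_eq z hz]; exact hneg z (interior_subset hz)) x hx y hy hxy
      calc lam * (y - x) ≤ -(f y - f x) := by nlinarith
        _ ≤ |f y - f x| := neg_le_abs _
  -- symmetric lower bound
  have hlower' : ∀ x ∈ I, ∀ y ∈ I, lam * |y - x| ≤ |f y - f x| := by
    intro x hx y hy
    rcases le_total x y with h | h
    · rw [abs_of_nonneg (by linarith)]; exact hlower x hx y hy h
    · rw [abs_of_nonpos (by linarith), abs_sub_comm]
      have := hlower y hy x hx h
      linarith
  -- the finset
  set s : Finset ℤ := (Finset.Icc (N:ℤ) (2*N)).filter (fun n => |f n - round (f n)| < δ)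
    with hsdef
  have hset : {n : ℤ | (N:ℤ) ≤ n ∧ n ≤ 2*N ∧ |f n - round (f n)| < δ} = ↑s := by
    ext n; simp [hsdef, Finset.mem_Icc, and_assoc]
  rw [hset, Set.ncard_coe_finset]
  have hmem : ∀ n ∈ s, ((n:ℝ)) ∈ I ∧ |f n - round (f n)| < δ := by
    intro n hn
    rw [hsdef, Finset.mem_filter, Finset.mem_Icc] at hn
    refine ⟨⟨?_, ?_⟩, hn.2⟩
    · exact_mod_cast hn.1.1
    · have := hn.1.2; push_cast; exact_mod_cast this
  set K : ℤ → ℤ := fun n => round (f n) with hKdef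
  -- fibers are small
  have hfiber : ∀ k, ((s.filter (fun n => K n = k)).card : ℝ) ≤ 2 * δ / lam + 1 := by
    intro k
    apply spread_card_le _ _ (by positivity)
    intro a ha b hb
    rw [Finset.mem_filter] at ha hb
    obtain ⟨haI, haδ⟩ := hmem a ha.1
    obtain ⟨hbI, hbδ⟩ := hmem b hb.1
    have hak := ha.2
    have hbk := hb.2
    have h1 : lam * |(a:ℝ) - b| ≤ |f a - f b| := hlower' b hbI a haI
    have h2 : |f a - f b| < 2 * δ := by
      have : ((K a : ℝ)) = K b := by rw [hak, hbk]
      calc |f a - f b| ≤ |f a - (K a : ℝ)| + |(K b : ℝ) - f b| := by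
            rw [← this]
            have := abs_sub_abs_le_abs_sub (f a) (f b)
            calc |f a - f b| = |(f a - K a) + (K a - f b)| := by ring_nf
              _ ≤ |f a - (K a:ℝ)| + |(K a:ℝ) - f b| := abs_add_le _ _
        _ < 2 * δ := by
            rw [abs_sub_comm ((K b:ℝ)) (f b)]
            simp only [hKdef] at haδ hbδ ⊢
            push_cast
            linarith
    have h3 : |(a:ℝ) - b| ≤ 2 * δ / lam := by
      rw [le_div_iff₀ hlam]; nlinarith [abs_nonneg ((a:ℝ) - b)]
    calc (a:ℝ) - b ≤ |(a:ℝ) - b| := le_abs_self _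
      _ ≤ 2 * δ / lam := h3
  -- image is small
  have himg : ((s.image K).card : ℝ) ≤ 2 * c * N * lam + 1 := by
    apply spread_card_le _ _ (by positivity)
    intro k hk l hl
    obtain ⟨n, hn, hnk⟩ := Finset.mem_image.1 hk
    obtain ⟨m, hm, hml⟩ := Finset.mem_image.1 hl
    obtain ⟨hnI, hnδ⟩ := hmem n hn
    obtain ⟨hmI, hmδ⟩ := hmem m hm
    rcases eq_or_ne k l with rfl | hkl
    · have : (k:ℝ) - k = 0 := by ring
      rw [this]; positivity
    · have h1 : |(k:ℝ) - l| ≤ c * lam * N + 2 * δ := by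
        have hup : |f n - f m| ≤ c * lam * N := by
          have := hupper m hmI n hnI
          have hd : |(n:ℝ) - m| ≤ N := by
            rw [abs_le]
            obtain ⟨h1, h2⟩ := hnI
            obtain ⟨h3, h4⟩ := hmI
            constructor <;> linarith
          nlinarith
        have e1 : ((k:ℝ)) = round (f n) := by rw [← hnk]
        have e2 : ((l:ℝ)) = round (f m) := by rw [← hml]
        calc |(k:ℝ) - l| = |(((k:ℝ)) - f n) + (f n - f m) + (f m - l)| := by ring_nf
          _ ≤ |((k:ℝ)) - f n| + |f n - f m| + |f m - (l:ℝ)| := by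
              exact (abs_add_le _ _).trans (by gcongr; exact abs_add_le _ _)
          _ ≤ δ + (c * lam * N) + δ := by
              rw [e1, e2, abs_sub_comm ((round (f n) : ℝ)) (f n)]
              gcongr <;> first
                | exact hnδ.le
                | exact hup
                | exact hmδ.le
          _ = c * lam * N + 2 * δ := by ring
      have h2 : (1:ℝ) ≤ |(k:ℝ) - l| := by
        have h0 : k - l ≠ 0 := sub_ne_zero.2 hkl
        have h1' : (1:ℤ) ≤ |k - l| := Int.one_le_abs h0
        have : ((1:ℤ):ℝ) ≤ ((|k - l| : ℤ) : ℝ) := by exact_mod_cast h1'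
        rw [Int.cast_abs] at this
        push_cast at this
        simpa using this
      have h3 : |(k:ℝ) - l| ≤ 2 * c * N * lam := by nlinarith [abs_nonneg ((k:ℝ) - l)]
      calc (k:ℝ) - l ≤ |(k:ℝ) - l| := le_abs_self _
        _ ≤ 2 * c * N * lam := h3
  -- combine
  have hcount : s.card = ∑ k ∈ s.image K, (s.filter (fun n => K n = k)).card :=
    Finset.card_eq_sum_card_image K s
  have hfinal : (s.card : ℝ) ≤ ((s.image K).card : ℝ) * (2 * δ / lam + 1) := by
    rw [hcount]
    push_cast
    calc (∑ k ∈ s.image K, ((s.filter (fun n => K n = k)).card : ℝ))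
        ≤ ∑ k ∈ s.image K, (2 * δ / lam + 1) := Finset.sum_le_sum (fun k _ => hfiber k)
      _ = ((s.image K).card : ℝ) * (2 * δ / lam + 1) := by
          rw [Finset.sum_const, nsmul_eq_mul]
  have hpos2 : (0:ℝ) ≤ 2 * δ / lam + 1 := by positivity
  calc (s.card : ℝ) ≤ ((s.image K).card : ℝ) * (2 * δ / lam + 1) := hfinal
    _ ≤ (2 * c * N * lam + 1) * (2 * δ / lam + 1) := by
        apply mul_le_mul_of_nonneg_right himg hpos2
    _ = 2 * c * N * lam + 4 * c * N * δ + 2 * δ / lam + 1 := by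
        field_simp
        ring
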